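/- Let ρ and σ be density matrices on a finite-dimensional Hilbert space with σ positive definite. Let Δ = ρ − σ, T = ‖Δ‖ (Frobenius norm), and β = λ_min(σ) the smallest eigenvalue of σ. Then the quantum relative entropy satisfies D(ρ‖σ) ≤ T²/β. -/

import Mathlib

open Matrix
open scoped ComplexOrder

/-- Frobenius norm of a complex matrix. -/
noncomputable def frobNorm {m n : Type*} [Fintype m] [Fintype n] (M : Matrix m n ℂ) : ℝ :=
  Real.sqrt (∑ i, ∑ j, ‖M i j‖ ^ 2)

/-- Matrix logarithm of a Hermitian matrix, defined through its spectral
decomposition (with the convention `log 0 = 0` on the spectrum); `0` otherwise. -/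
noncomputable def matLog {n : ℕ} (M : Matrix (Fin n) (Fin n) ℂ) : Matrix (Fin n) (Fin n) ℂ :=
  if h : M.IsHermitian then
    (h.eigenvectorUnitary : Matrix (Fin n) (Fin n) ℂ) *
      Matrix.diagonal (fun i => (Real.log (h.eigenvalues i) : ℂ)) *
      star (h.eigenvectorUnitary : Matrix (Fin n) (Fin n) ℂ)
  else 0

/-- Quantum relative entropy `D(ρ‖σ) = Tr(ρ (log ρ − log σ))` (real part). -/
noncomputable def relEnt {n : ℕ} (ρ σ : Matrix (Fin n) (Fin n) ℂ) : ℝ :=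
  ((ρ * (matLog ρ - matLog σ)).trace).re

/-- If `ρ`, `σ` are density matrices with `σ` positive definite,
`Δ = ρ − σ`, `T = ‖Δ‖` (Frobenius) and `β = λ_min(σ)`, then `D(ρ‖σ) ≤ T²/β`. -/
private lemma aux_log' {p q : ℝ} (hp : 0 ≤ p) (hq : 0 < q) :
    p * (Real.log p - Real.log q) ≤ p * (p - q) / q := by
  rcases eq_or_lt_of_le hp with h | h
  · simp [← h]
  · have h1 : Real.log p - Real.log q = Real.log (p / q) := (Real.log_div h.ne' hq.ne').symm
    have h2 : Real.log (p / q) ≤ p / q - 1 := Real.log_le_sub_one_of_pos (div_pos h hq)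
    have h3 : p * Real.log (p / q) ≤ p * (p / q - 1) := mul_le_mul_of_nonneg_left h2 hp
    rw [h1]
    refine h3.trans (le_of_eq ?_)
    field_simp

private lemma core_ineq' {n : ℕ} (p q : Fin n → ℝ) (c : Fin n → Fin n → ℝ) (β : ℝ)
    (hp : ∀ i, 0 ≤ p i) (hq : ∀ j, 0 < q j) (hc : ∀ i j, 0 ≤ c i j)
    (hrow : ∀ i, ∑ j, c i j = 1)
    (hsum_pc : ∑ i, ∑ j, c i j * p i = 1)
    (hsum_qc : ∑ i, ∑ j, c i j * q j = 1)
    (hβ : 0 < β) (hβq : ∀ j, β ≤ q j) :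
    ∑ i, p i * Real.log (p i) - ∑ i, ∑ j, c i j * p i * Real.log (q j)
      ≤ (∑ i, ∑ j, c i j * (p i - q j) ^ 2) / β := by
  have step1 : ∑ i, p i * Real.log (p i) = ∑ i, ∑ j, c i j * (p i * Real.log (p i)) := by
    refine Finset.sum_congr rfl fun i _ => ?_
    rw [← Finset.sum_mul, hrow, one_mul]
  have step2 : ∑ i, p i * Real.log (p i) - ∑ i, ∑ j, c i j * p i * Real.log (q j)
      = ∑ i, ∑ j, c i j * (p i * (Real.log (p i) - Real.log (q j))) := by
    rw [step1, ← Finset.sum_sub_distrib]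
    refine Finset.sum_congr rfl fun i _ => ?_
    rw [← Finset.sum_sub_distrib]
    refine Finset.sum_congr rfl fun j _ => ?_
    ring
  rw [step2]
  have step3 : ∑ i, ∑ j, c i j * (p i * (Real.log (p i) - Real.log (q j)))
      ≤ ∑ i, ∑ j, c i j * (p i * (p i - q j) / q j) := by
    refine Finset.sum_le_sum fun i _ => Finset.sum_le_sum fun j _ => ?_
    exact mul_le_mul_of_nonneg_left (aux_log' (hp i) (hq j)) (hc i j)
  refine step3.trans ?_
  have step4 : ∑ i, ∑ j, c i j * (p i * (p i - q j) / q j)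
      = ∑ i, ∑ j, (c i j * ((p i - q j) ^ 2 / q j) + (c i j * p i - c i j * q j)) := by
    refine Finset.sum_congr rfl fun i _ => Finset.sum_congr rfl fun j _ => ?_
    have hqj := (hq j).ne'
    field_simp
    ring
  rw [step4]
  have step5 : ∑ i, ∑ j, (c i j * ((p i - q j) ^ 2 / q j) + (c i j * p i - c i j * q j))
      = ∑ i, ∑ j, c i j * ((p i - q j) ^ 2 / q j) := by
    simp only [Finset.sum_add_distrib, Finset.sum_sub_distrib]
    rw [hsum_pc, hsum_qc]
    ring
  rw [step5]
  have step6 : ∑ i, ∑ j, c i j * ((p i - q j) ^ 2 / q j)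
      ≤ ∑ i, ∑ j, c i j * ((p i - q j) ^ 2 / β) := by
    refine Finset.sum_le_sum fun i _ => Finset.sum_le_sum fun j _ => ?_
    exact mul_le_mul_of_nonneg_left
      (div_le_div_of_nonneg_left (sq_nonneg _) hβ (hβq j)) (hc i j)
  refine step6.trans (le_of_eq ?_)
  rw [Finset.sum_div]
  refine Finset.sum_congr rfl fun i _ => ?_
  rw [Finset.sum_div]
  exact Finset.sum_congr rfl fun j _ => (mul_div_assoc _ _ _).symm

private lemma traceDiagConj {n : ℕ} (d e : Fin n → ℝ) (W : Matrix (Fin n) (Fin n) ℂ) :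
    (Matrix.diagonal (fun i => ((d i : ℝ) : ℂ)) * W *
        Matrix.diagonal (fun j => ((e j : ℝ) : ℂ)) * star W).trace
      = ((∑ i, ∑ j, d i * e j * Complex.normSq (W i j) : ℝ) : ℂ) := by
  have h : Matrix.diagonal (fun i => ((d i : ℝ) : ℂ)) * W *
      Matrix.diagonal (fun j => ((e j : ℝ) : ℂ))
      = Matrix.of fun i j => (d i : ℂ) * W i j * (e j : ℂ) := by
    ext i j
    simp [Matrix.diagonal_mul, Matrix.mul_diagonal]
  rw [h, Matrix.trace]
  push_cast
  refine Finset.sum_congr rfl fun i _ => ?_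
  simp only [Matrix.diag, Matrix.mul_apply, Matrix.of_apply, Matrix.star_apply]
  refine Finset.sum_congr rfl fun j _ => ?_
  rw [RCLike.star_def, ← Complex.mul_conj]
  ring

private lemma traceFormula {n : ℕ} (U V : Matrix (Fin n) (Fin n) ℂ) (d e : Fin n → ℝ) :
    (U * Matrix.diagonal (fun i => ((d i : ℝ) : ℂ)) * star U *
        (V * Matrix.diagonal (fun j => ((e j : ℝ) : ℂ)) * star V)).trace
      = ((∑ i, ∑ j, d i * e j * Complex.normSq ((star U * V) i j) : ℝ) : ℂ) := by
  rw [show U * Matrix.diagonal (fun i => ((d i : ℝ) : ℂ)) * star U *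
        (V * Matrix.diagonal (fun j => ((e j : ℝ) : ℂ)) * star V)
      = U * (Matrix.diagonal (fun i => ((d i : ℝ) : ℂ)) * (star U * V) *
          Matrix.diagonal (fun j => ((e j : ℝ) : ℂ)) * star V) by
    simp only [Matrix.mul_assoc]]
  rw [Matrix.trace_mul_comm]
  rw [show Matrix.diagonal (fun i => ((d i : ℝ) : ℂ)) * (star U * V) *
        Matrix.diagonal (fun j => ((e j : ℝ) : ℂ)) * star V * U
      = Matrix.diagonal (fun i => ((d i : ℝ) : ℂ)) * (star U * V) *
        Matrix.diagonal (fun j => ((e j : ℝ) : ℂ)) * star (star U * V) by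
    rw [Matrix.star_mul, star_star]
    simp only [Matrix.mul_assoc]]
  exact traceDiagConj d e (star U * V)

private lemma sumDiagOne {n : ℕ} (f : Fin n → Fin n → ℝ) :
    ∑ i, ∑ j, f i j * Complex.normSq ((1 : Matrix (Fin n) (Fin n) ℂ) i j) = ∑ i, f i i := by
  refine Finset.sum_congr rfl fun i _ => ?_
  rw [Finset.sum_eq_single i]
  · simp [Matrix.one_apply_eq]
  · intro j _ hj
    simp [Matrix.one_apply_ne (Ne.symm hj)]
  · simp

theorem relEnt_le_sq_div_min_eigenvalue {n : ℕ}
    {ρ σ : Matrix (Fin n) (Fin n) ℂ}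
    (hρ : ρ.PosSemidef) (hρtr : ρ.trace = 1)
    (hσ : σ.PosDef) (hσtr : σ.trace = 1)
    (β : ℝ) (hβ₁ : ∀ i, β ≤ hσ.1.eigenvalues i) (hβ₂ : ∃ i, hσ.1.eigenvalues i = β) :
    relEnt ρ σ ≤ frobNorm (ρ - σ) ^ 2 / β := by
  classical
  set U : Matrix (Fin n) (Fin n) ℂ := (hρ.1.eigenvectorUnitary : Matrix (Fin n) (Fin n) ℂ) with hUdef
  set V : Matrix (Fin n) (Fin n) ℂ := (hσ.1.eigenvectorUnitary : Matrix (Fin n) (Fin n) ℂ) with hVdef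
  set p : Fin n → ℝ := hρ.1.eigenvalues with hpdef
  set q : Fin n → ℝ := hσ.1.eigenvalues with hqdef
  set W : Matrix (Fin n) (Fin n) ℂ := star U * V with hWdef
  set c : Fin n → Fin n → ℝ := fun i j => Complex.normSq (W i j) with hcdef
  -- unitarity
  have hUU : star U * U = 1 := Matrix.UnitaryGroup.star_mul_self _
  have hUUs : U * star U = 1 := Matrix.mem_unitaryGroup_iff.mp hρ.1.eigenvectorUnitary.2
  have hVV : star V * V = 1 := Matrix.UnitaryGroup.star_mul_self _
  have hVVs : V * star V = 1 := Matrix.mem_unitaryGroup_iff.mp hσ.1.eigenvectorUnitary.2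
  have hW1 : W * star W = 1 := by
    rw [hWdef, Matrix.star_mul, star_star, Matrix.mul_assoc, ← Matrix.mul_assoc V, hVVs,
      Matrix.one_mul, hUU]
  have hW2 : star W * W = 1 := by
    rw [hWdef, Matrix.star_mul, star_star, Matrix.mul_assoc, ← Matrix.mul_assoc U, hUUs,
      Matrix.one_mul, hVV]
  -- spectral decompositions
  have hρdec : ρ = U * Matrix.diagonal (fun i => ((p i : ℝ) : ℂ)) * star U := hρ.1.spectral_theorem
  have hσdec : σ = V * Matrix.diagonal (fun j => ((q j : ℝ) : ℂ)) * star V := hσ.1.spectral_theorem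
  have hlogρ : matLog ρ = U * Matrix.diagonal (fun i => ((Real.log (p i) : ℝ) : ℂ)) * star U := by
    rw [matLog, dif_pos hρ.1]
  have hlogσ : matLog σ = V * Matrix.diagonal (fun j => ((Real.log (q j) : ℝ) : ℂ)) * star V := by
    rw [matLog, dif_pos hσ.1]
  -- positivity facts
  have hpnn : ∀ i, 0 ≤ p i := fun i => hρ.eigenvalues_nonneg i
  have hqpos : ∀ j, 0 < q j := fun j => hσ.eigenvalues_pos j
  have hβpos : 0 < β := by
    obtain ⟨i, hi⟩ := hβ₂
    exact hi ▸ hqpos i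
  have hcnn : ∀ i j, 0 ≤ c i j := fun i j => Complex.normSq_nonneg _
  -- row and column sums of c
  have hrow : ∀ i, ∑ j, c i j = 1 := by
    intro i
    have h1 : (W * star W) i i = (1 : Matrix (Fin n) (Fin n) ℂ) i i := by rw [hW1]
    rw [Matrix.mul_apply, Matrix.one_apply_eq] at h1
    have h2 : ((∑ j, c i j : ℝ) : ℂ) = 1 := by
      rw [← h1]
      push_cast
      refine Finset.sum_congr rfl fun j _ => ?_
      rw [Matrix.star_apply, RCLike.star_def, Complex.mul_conj]
    exact_mod_cast h2
  have hcol : ∀ j, ∑ i, c i j = 1 := by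
    intro j
    have h1 : (star W * W) j j = (1 : Matrix (Fin n) (Fin n) ℂ) j j := by rw [hW2]
    rw [Matrix.mul_apply, Matrix.one_apply_eq] at h1
    have h2 : ((∑ i, c i j : ℝ) : ℂ) = 1 := by
      rw [← h1]
      push_cast
      refine Finset.sum_congr rfl fun i _ => ?_
      rw [Matrix.star_apply, RCLike.star_def, mul_comm, Complex.mul_conj]
    exact_mod_cast h2
  -- trace of ρ and σ give sums of eigenvalues
  have hsum_p : ∑ i, p i = 1 := by
    have h1 : ρ.trace = ((∑ i, p i : ℝ) : ℂ) := by
      rw [hρdec, Matrix.trace_mul_cycle, hUU, Matrix.one_mul, Matrix.trace_diagonal]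
      push_cast
      rfl
    rw [hρtr] at h1
    exact_mod_cast h1.symm
  have hsum_q : ∑ j, q j = 1 := by
    have h1 : σ.trace = ((∑ j, q j : ℝ) : ℂ) := by
      rw [hσdec, Matrix.trace_mul_cycle, hVV, Matrix.one_mul, Matrix.trace_diagonal]
      push_cast
      rfl
    rw [hσtr] at h1
    exact_mod_cast h1.symm
  -- the four traces
  have t_loglog : (ρ * matLog ρ).trace = ((∑ i, p i * Real.log (p i) : ℝ) : ℂ) := by
    rw [hlogρ]
    conv_lhs => rw [hρdec]
    rw [traceFormula, hUU]
    norm_cast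
    exact sumDiagOne fun i j => p i * Real.log (p j)
  have t_cross : (ρ * matLog σ).trace = ((∑ i, ∑ j, p i * Real.log (q j) * c i j : ℝ) : ℂ) := by
    rw [hlogσ]
    conv_lhs => rw [hρdec]
    rw [traceFormula]
  have t_ρρ : (ρ * ρ).trace = ((∑ i, p i * p i : ℝ) : ℂ) := by
    conv_lhs => rw [hρdec]
    rw [traceFormula, hUU]
    norm_cast
    exact sumDiagOne fun i j => p i * p j
  have t_σσ : (σ * σ).trace = ((∑ j, q j * q j : ℝ) : ℂ) := by
    conv_lhs => rw [hσdec]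
    rw [traceFormula, hVV]
    norm_cast
    exact sumDiagOne fun i j => q i * q j
  have t_ρσ : (ρ * σ).trace = ((∑ i, ∑ j, p i * q j * c i j : ℝ) : ℂ) := by
    conv_lhs => rw [hρdec, hσdec]
    rw [traceFormula]
  -- relEnt in terms of eigen-data
  have hrel : relEnt ρ σ
      = (∑ i, p i * Real.log (p i)) - ∑ i, ∑ j, p i * Real.log (q j) * c i j := by
    rw [relEnt, Matrix.mul_sub, Matrix.trace_sub, t_loglog, t_cross, ← Complex.ofReal_sub,
      Complex.ofReal_re]
  -- Frobenius norm in terms of eigen-data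
  have hΔ : (ρ - σ).IsHermitian := hρ.1.sub hσ.1
  have tΔ : ((ρ - σ) * (ρ - σ)).trace
      = ((∑ i, ∑ j, ‖(ρ - σ) i j‖ ^ 2 : ℝ) : ℂ) := by
    rw [Matrix.trace]
    push_cast
    refine Finset.sum_congr rfl fun i _ => ?_
    simp only [Matrix.diag, Matrix.mul_apply]
    refine Finset.sum_congr rfl fun k _ => ?_
    rw [← hΔ.apply k i, RCLike.star_def, Complex.mul_conj]
    norm_cast
    exact (Complex.sq_norm _).symm
  have texp : ((ρ - σ) * (ρ - σ)).trace
      = ((∑ i, p i * p i : ℝ) : ℂ) - ((∑ i, ∑ j, p i * q j * c i j : ℝ) : ℂ)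
        - ((∑ i, ∑ j, p i * q j * c i j : ℝ) : ℂ) + ((∑ j, q j * q j : ℝ) : ℂ) := by
    have hmul : (ρ - σ) * (ρ - σ) = ρ * ρ - ρ * σ - σ * ρ + σ * σ := by noncomm_ring
    rw [hmul, Matrix.trace_add, Matrix.trace_sub, Matrix.trace_sub,
      Matrix.trace_mul_comm σ ρ, t_ρρ, t_ρσ, t_σσ]
  have habs : ∑ i, ∑ j, ‖(ρ - σ) i j‖ ^ 2
      = ∑ i, p i * p i + ∑ j, q j * q j - 2 * ∑ i, ∑ j, p i * q j * c i j := by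
    have h1 : ((∑ i, ∑ j, ‖(ρ - σ) i j‖ ^ 2 : ℝ) : ℂ)
        = ((∑ i, p i * p i + ∑ j, q j * q j - 2 * ∑ i, ∑ j, p i * q j * c i j : ℝ) : ℂ) := by
      rw [← tΔ, texp]
      push_cast
      ring
    exact_mod_cast h1
  have eA : ∑ i, ∑ j, c i j * (p i * p i) = ∑ i, p i * p i := by
    refine Finset.sum_congr rfl fun i _ => ?_
    rw [← Finset.sum_mul, hrow, one_mul]
  have eB : ∑ i, ∑ j, c i j * (q j * q j) = ∑ j, q j * q j := by
    rw [Finset.sum_comm]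
    refine Finset.sum_congr rfl fun j _ => ?_
    rw [← Finset.sum_mul, hcol, one_mul]
  have e2 : ∑ i, ∑ j, c i j * (p i - q j) ^ 2
      = (∑ i, ∑ j, c i j * (p i * p i)) + (∑ i, ∑ j, c i j * (q j * q j))
        - 2 * ∑ i, ∑ j, p i * q j * c i j := by
    have h : ∀ i j : Fin n, c i j * (p i - q j) ^ 2
        = c i j * (p i * p i) + c i j * (q j * q j) - 2 * (p i * q j * c i j) := by
      intros; ring
    simp only [h, Finset.sum_sub_distrib, Finset.sum_add_distrib, ← Finset.mul_sum]
  have hfrob : frobNorm (ρ - σ) ^ 2 = ∑ i, ∑ j, c i j * (p i - q j) ^ 2 := by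
    rw [frobNorm, Real.sq_sqrt (by positivity), habs, e2, eA, eB]
  -- assemble
  have hsum_pc : ∑ i, ∑ j, c i j * p i = 1 := by
    rw [← hsum_p]
    refine Finset.sum_congr rfl fun i _ => ?_
    rw [← Finset.sum_mul, hrow, one_mul]
  have hsum_qc : ∑ i, ∑ j, c i j * q j = 1 := by
    rw [← hsum_q, Finset.sum_comm]
    refine Finset.sum_congr rfl fun j _ => ?_
    rw [← Finset.sum_mul, hcol, one_mul]
  have hconv : ∑ i, ∑ j, p i * Real.log (q j) * c i j
      = ∑ i, ∑ j, c i j * p i * Real.log (q j) := by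
    refine Finset.sum_congr rfl fun i _ => Finset.sum_congr rfl fun j _ => by ring
  rw [hrel, hconv, hfrob]
  exact core_ineq' p q c β hpnn hqpos hcnn hrow hsum_pc hsum_qc hβpos hβ₁
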